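/- Under the Z-action on words of degree m given by 1 · (i_1 i_2 ⋯ i_m) = i_1 i_3 i_4 ⋯ i_m i_2 (fixing the first letter and cyclically rotating the rest), every orbit contains a unique word of the form j v^k where j is a letter, v is a Lyndon word, and k ≥ 1; moreover k divides m_j − 1 and k divides m_t for all t ≠ j. -/

import Mathlib

/-- The degree of a word: the number of occurrences of each letter. -/
def degreeW {n : ℕ} (w : List (Fin n)) : Fin n → ℕ := fun i => w.count i

/-- A nonempty word `w` is Lyndon if `w <_lex v` for every factorization `w = uv`
into nonempty words. -/
def IsLyndon {n : ℕ} (w : List (Fin n)) : Prop :=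
  w ≠ [] ∧ ∀ u v : List (Fin n), w = u ++ v → u ≠ [] → v ≠ [] →
    List.Lex (· < ·) w v

/-- A nonempty word `w` is a necklace if `w ≤_lex vu` for every factorization `w = uv`
into nonempty words. -/
def IsNecklace {n : ℕ} (w : List (Fin n)) : Prop :=
  w ≠ [] ∧ ∀ u v : List (Fin n), w = u ++ v → u ≠ [] → v ≠ [] →
    ¬ List.Lex (· < ·) (v ++ u) w

/-- `ℓ_m`, the number of Lyndon words of degree `m`. -/
noncomputable def lyndonCount {n : ℕ} (m : Fin n → ℕ) : ℕ :=
  Nat.card {w : List (Fin n) // degreeW w = m ∧ IsLyndon w}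

/-- `N_m`, the number of necklaces of degree `m`. -/
noncomputable def necklaceCount {n : ℕ} (m : Fin n → ℕ) : ℕ :=
  Nat.card {w : List (Fin n) // degreeW w = m ∧ IsNecklace w}

/-- Cyclic rotation: `i_1 i_2 ⋯ i_m ↦ i_2 ⋯ i_m i_1`. -/
def rotateW {n : ℕ} : List (Fin n) → List (Fin n)
  | [] => []
  | a :: t => t ++ [a]

/-- The action fixing the first letter and cyclically rotating the rest:
`i_1 i_2 i_3 ⋯ i_m ↦ i_1 i_3 ⋯ i_m i_2`. -/
def rot2W {n : ℕ} : List (Fin n) → List (Fin n)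
  | [] => []
  | a :: t => a :: rotateW t

/-- `v^k`: the `k`-fold concatenation of the word `v`. -/
def powW {n : ℕ} (v : List (Fin n)) (k : ℕ) : List (Fin n) :=
  (List.replicate k v).flatten

section LexHelpers
variable {α : Type*} [LinearOrder α]
local notation "lex" => List.Lex (· < · : α → α → Prop)
theorem lex_asymm {a b : List α} (h : lex a b) : ¬ lex b a :=
  fun h' => (lt_asymm (a := a) (b := b) h) h'
theorem lex_irrefl (a : List α) : ¬ lex a a := fun h => lex_asymm h h
theorem lex_trans {a b c : List α} (h1 : lex a b) (h2 : lex b c) : lex a c :=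
  lt_trans (a := a) (b := b) (c := c) h1 h2
theorem lex_trichotomy (a b : List α) : lex a b ∨ a = b ∨ lex b a :=
  lt_trichotomy a b
theorem lex_append_of_not_prefix : ∀ {a b : List α}, lex a b → ¬ a <+: b →
    ∀ u w : List α, lex (a ++ u) (b ++ w) := by
  intro a b h
  induction h with
  | nil => intro hp; exact absurd (List.nil_prefix) hp
  | @rel a l₁ b l₂ hab => intro _ u w; exact List.Lex.rel hab
  | @cons a l₁ l₂ h ih =>
    intro hp u w
    exact List.Lex.cons (ih (fun hpre => hp (List.cons_prefix_cons.2 ⟨rfl, hpre⟩)) u w)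
theorem lex_append_left_iff (p : List α) {a b : List α} :
    lex (p ++ a) (p ++ b) ↔ lex a b := by
  induction p with
  | nil => simp
  | cons x p ih => simp only [List.cons_append]; rw [List.lex_cons_iff]; exact ih
theorem not_lex_of_prefix {a b : List α} (h : b <+: a) : ¬ lex a b := by
  obtain ⟨c, rfl⟩ := h
  intro hl
  have : lex (b ++ c) (b ++ []) := by simpa using hl
  rw [lex_append_left_iff] at this
  exact List.not_lex_nil this
theorem lex_of_prefix_ne {a b : List α} (h : a <+: b) (hne : a ≠ b) : lex a b := by
  obtain ⟨c, rfl⟩ := h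
  have hc : c ≠ [] := by rintro rfl; simp at hne
  have : lex (a ++ []) (a ++ c) := by
    rw [lex_append_left_iff]
    cases c with
    | nil => exact absurd rfl hc
    | cons x xs => exact List.Lex.nil
  simpa using this
end LexHelpers

section Lyndon
variable {n : ℕ}
local notation "lex" => List.Lex (· < · : Fin n → Fin n → Prop)

theorem lyndon_singleton (a : Fin n) : IsLyndon [a] := by
  refine ⟨by simp, fun u v h hu hv => ?_⟩
  have := congrArg List.length h
  simp [List.length_append] at this
  have h1 : 1 ≤ u.length := List.length_pos_iff.2 hu
  have h2 : 1 ≤ v.length := List.length_pos_iff.2 hv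
  omega

/-- If `x < y` with `y` Lyndon and `x` nonempty, then `x ++ y ++ A < y ++ B`. -/
theorem lyndon_aux {x y : List (Fin n)} (hy : IsLyndon y) (hx : x ≠ [])
    (h : lex x y) (A B : List (Fin n)) : lex (x ++ (y ++ A)) (y ++ B) := by
  by_cases hpre : x <+: y
  · obtain ⟨t, rfl⟩ := hpre
    have ht : t ≠ [] := by rintro rfl; simp at h
    have hyt : lex (x ++ t) t := hy.2 x t rfl hx ht
    have hnp : ¬ (x ++ t) <+: t := by
      intro hp
      have := hp.length_le
      have hxl : 1 ≤ x.length := List.length_pos_iff.2 hx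
      rw [List.length_append] at this
      omega
    have key := lex_append_of_not_prefix hyt hnp A B
    have : lex (x ++ (((x ++ t) ++ A))) (x ++ (t ++ B)) := by
      rw [lex_append_left_iff]
      exact key
    simpa [List.append_assoc] using this
  · exact lex_append_of_not_prefix h hpre (y ++ A) B


/-- `x ++ y ++ A < y ++ B` specialized: `x ++ y < y`. -/
theorem lyndon_aux' {x y : List (Fin n)} (hy : IsLyndon y) (hx : x ≠ [])
    (h : lex x y) : lex (x ++ y) y := by
  have := lyndon_aux hy hx h [] []
  simpa using this

/-- Concatenation of two Lyndon words `x < y` is Lyndon. -/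
theorem lyndon_append {x y : List (Fin n)} (hx : IsLyndon x) (hy : IsLyndon y)
    (h : lex x y) : IsLyndon (x ++ y) := by
  refine ⟨by simp [hx.1], fun u v huv hu hv => ?_⟩
  rcases List.append_eq_append_iff.1 huv.symm with ⟨x', hux, hvx⟩ | ⟨y₀, hu', hy'⟩
  · -- x = u ++ x', v = x' ++ y
    by_cases hx' : x' = []
    · subst hx'
      rw [List.append_nil] at hux
      subst hux
      rw [hvx, List.nil_append]
      exact lyndon_aux' hy hx.1 h
    · have h1 : lex x x' := hx.2 u x' hux hu hx'
      have hnp : ¬ x <+: x' := by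
        intro hp
        have hlen : u.length + x'.length ≤ x'.length := by
          rw [← List.length_append, ← hux]; exact hp.length_le
        have hul : 1 ≤ u.length := List.length_pos_iff.2 hu
        omega
      rw [hvx]
      exact lex_append_of_not_prefix h1 hnp y y
  · -- u = x ++ y₀, y = y₀ ++ v
    by_cases hy₀ : y₀ = []
    · subst hy₀
      rw [List.nil_append] at hy'
      rw [← hy']
      exact lyndon_aux' hy hx.1 h
    · have h1 : lex (x ++ y) y := lyndon_aux' hy hx.1 h
      have h2 : lex y v := hy.2 y₀ v hy' hy₀ hv
      exact lex_trans h1 h2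

theorem powW_zero (v : List (Fin n)) : powW v 0 = [] := by simp [powW]

theorem powW_succ (v : List (Fin n)) (k : ℕ) : powW v (k + 1) = v ++ powW v k := by
  simp [powW, List.replicate_succ]

theorem powW_succ' (v : List (Fin n)) (k : ℕ) : powW v (k + 1) = powW v k ++ v := by
  simp [powW, List.replicate_succ']

theorem powW_one (v : List (Fin n)) : powW v 1 = v := by simp [powW]

theorem length_powW (v : List (Fin n)) (k : ℕ) : (powW v k).length = k * v.length := by
  induction k with
  | zero => simp [powW_zero]
  | succ k ih => rw [powW_succ, List.length_append, ih]; ring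

theorem count_powW (v : List (Fin n)) (k : ℕ) (x : Fin n) :
    (powW v k).count x = k * v.count x := by
  induction k with
  | zero => simp [powW_zero]
  | succ k ih => rw [powW_succ, List.count_append, ih]; ring

theorem powW_ne_nil {v : List (Fin n)} (hv : v ≠ []) {k : ℕ} (hk : 1 ≤ k) :
    powW v k ≠ [] := by
  obtain ⟨k, rfl⟩ := Nat.exists_eq_add_of_le hk
  rw [Nat.add_comm, powW_succ]
  simp [hv]

theorem rotate_powW_length {v : List (Fin n)} {k : ℕ} (hk : 1 ≤ k) :
    (powW v k).rotate v.length = powW v k := by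
  obtain ⟨k, rfl⟩ := Nat.exists_eq_add_of_le hk
  rw [Nat.add_comm 1 k, powW_succ]
  have hlen : v.length ≤ (v ++ powW v k).length := by simp
  rw [List.rotate_eq_drop_append_take hlen, List.drop_left, List.take_left, ← powW_succ',
    ← powW_succ]

theorem rotate_powW_mul_add {v : List (Fin n)} {k : ℕ} (hk : 1 ≤ k) (q b : ℕ) :
    (powW v k).rotate (v.length * q + b) = (powW v k).rotate b := by
  induction q with
  | zero => simp
  | succ q ih =>
    have : v.length * (q + 1) + b = v.length + (v.length * q + b) := by ring
    rw [this, ← List.rotate_rotate, rotate_powW_length hk, ih]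

theorem rotate_powW_reduce {v : List (Fin n)} {k : ℕ} (hk : 1 ≤ k) (i : ℕ) :
    (powW v k).rotate i = (powW v k).rotate (i % v.length) := by
  conv_lhs => rw [← Nat.div_add_mod i v.length]
  exact rotate_powW_mul_add hk _ _

/-- A power of a Lyndon word is strictly smaller than its nontrivial rotations. -/
theorem lyndon_pow_lt_rotate {v : List (Fin n)} (hv : IsLyndon v) {k : ℕ} (hk : 1 ≤ k)
    {i : ℕ} (hi : i % v.length ≠ 0) :
    lex (powW v k) ((powW v k).rotate i) := by
  rw [rotate_powW_reduce hk]
  set b := i % v.length with hb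
  have hvlen : 0 < v.length := List.length_pos_iff.2 hv.1
  have hblt : b < v.length := Nat.mod_lt _ hvlen
  have hbpos : 0 < b := Nat.pos_of_ne_zero hi
  -- powW v k = v ++ powW v (k-1)
  obtain ⟨k, rfl⟩ := Nat.exists_eq_add_of_le hk
  rw [Nat.add_comm 1 k, powW_succ]
  have hlen : b ≤ (v ++ powW v k).length :=
    le_trans (le_of_lt hblt) (by simp)
  rw [List.rotate_eq_drop_append_take hlen,
    List.drop_append_of_le_length (le_of_lt hblt),
    List.take_append_of_le_length (le_of_lt hblt)]
  set u := v.take b with hu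
  set x := v.drop b with hx
  have hvux : v = u ++ x := (List.take_append_drop b v).symm
  have hune : u ≠ [] := by
    apply List.ne_nil_of_length_pos
    rw [hu, List.length_take]
    omega
  have hxne : x ≠ [] := by
    apply List.ne_nil_of_length_pos
    rw [hx, List.length_drop]
    omega
  have hvx : lex v x := hv.2 u x hvux hune hxne
  have hnp : ¬ v <+: x := by
    intro hp
    have := hp.length_le
    have : v.length ≤ v.length - b := by simpa [hx, List.length_drop] using this
    omega
  have := lex_append_of_not_prefix hvx hnp (powW v k) (powW v k ++ u)
  simpa [List.append_assoc] using this

/-- A power of a Lyndon word is minimal among its rotations. -/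
theorem lyndon_pow_min {v : List (Fin n)} (hv : IsLyndon v) {k : ℕ} (hk : 1 ≤ k)
    (i : ℕ) : ¬ lex ((powW v k).rotate i) (powW v k) := by
  by_cases hi : i % v.length = 0
  · have : (powW v k).rotate i = powW v k := by
      rw [rotate_powW_reduce hk, hi, List.rotate_zero]
    rw [this]
    exact lex_irrefl _
  · exact lex_asymm (lyndon_pow_lt_rotate hv hk hi)

/-- A rotation of a Lyndon power equal to itself must rotate by a multiple of `v.length`. -/
theorem lyndon_pow_rotate_eq {v : List (Fin n)} (hv : IsLyndon v) {k : ℕ} (hk : 1 ≤ k)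
    {i : ℕ} (h : (powW v k).rotate i = powW v k) : i % v.length = 0 := by
  by_contra hi
  have := lyndon_pow_lt_rotate hv hk hi
  rw [h] at this
  exact lex_irrefl _ this

theorem chain'_or_split {β : Type*} (R : β → β → Prop) : ∀ L : List β,
    L.Chain' R ∨ ∃ P a b Q, L = P ++ a :: b :: Q ∧ ¬ R a b
  | [] => Or.inl (List.isChain_nil)
  | [x] => Or.inl (List.isChain_singleton _)
  | x :: y :: T => by
    by_cases hxy : R x y
    · rcases chain'_or_split R (y :: T) with h | ⟨P, a, b, Q, heq, hnR⟩
      · exact Or.inl (List.isChain_cons_cons.2 ⟨hxy, h⟩)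
      · exact Or.inr ⟨x :: P, a, b, Q, by rw [heq]; rfl, hnR⟩
    · exact Or.inr ⟨[], x, y, T, rfl, hxy⟩

theorem cfl_aux : ∀ (N : ℕ) (L : List (List (Fin n))), L.length ≤ N →
    (∀ l ∈ L, IsLyndon l) →
    ∃ M : List (List (Fin n)), (∀ l ∈ M, IsLyndon l) ∧ M.flatten = L.flatten ∧
      M.Chain' (fun a b => ¬ lex a b) ∧ (M = [] → L = []) := by
  intro N
  induction N with
  | zero =>
    intro L hL _
    have : L = [] := List.length_eq_zero_iff.1 (Nat.le_zero.1 hL)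
    subst this
    exact ⟨[], by simp, rfl, List.isChain_nil, fun _ => rfl⟩
  | succ N ih =>
    intro L hL hly
    rcases chain'_or_split (fun a b => ¬ lex a b) L with hc | ⟨P, a, b, Q, rfl, hnR⟩
    · exact ⟨L, hly, rfl, hc, fun h => h⟩
    · have hlex : lex a b := not_not.1 hnR
      have ha : IsLyndon a := hly a (by simp)
      have hb : IsLyndon b := hly b (by simp)
      have hlen : (P ++ (a ++ b) :: Q).length ≤ N := by
        simp only [List.length_append, List.length_cons] at hL ⊢
        omega
      have hly' : ∀ l ∈ P ++ (a ++ b) :: Q, IsLyndon l := by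
        intro l hl
        rcases List.mem_append.1 hl with h | h
        · exact hly l (List.mem_append.2 (Or.inl h))
        · rcases List.mem_cons.1 h with rfl | h
          · exact lyndon_append ha hb hlex
          · exact hly l (by simp [h])
      obtain ⟨M, h1, h2, h3, h4⟩ := ih (P ++ (a ++ b) :: Q) hlen hly'
      refine ⟨M, h1, ?_, h3, fun h => absurd (h4 h) (by simp)⟩
      rw [h2]
      simp [List.flatten_append, List.append_assoc]

theorem flatten_singletons (s : List (Fin n)) : (s.map (fun a => [a])).flatten = s := by
  induction s with
  | nil => simp
  | cons a t ih => simp [ih]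

instance : IsTrans (List (Fin n)) (fun a b => ¬ lex a b) := by
  constructor
  intro a b c hab hbc hac
  rcases lex_trichotomy b a with h | h | h
  · exact hbc (lex_trans h hac)
  · exact hbc (h ▸ hac)
  · exact hab h

theorem necklace_eq_pow {s : List (Fin n)} (hs : s ≠ [])
    (hmin : ∀ u x : List (Fin n), s = u ++ x → u ≠ [] → x ≠ [] → ¬ lex (x ++ u) s) :
    ∃ v k, IsLyndon v ∧ 1 ≤ k ∧ s = powW v k := by
  obtain ⟨M, hly, hflat, hchain, hnil⟩ := cfl_aux (s.map (fun a => [a])).length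
    (s.map (fun a => [a])) le_rfl (by
      intro l hl
      simp only [List.mem_map] at hl
      obtain ⟨a, _, rfl⟩ := hl
      exact lyndon_singleton a)
  rw [flatten_singletons] at hflat
  have hM : M ≠ [] := by
    intro h
    have := hnil h
    rw [List.map_eq_nil_iff] at this
    exact hs this
  obtain ⟨v, M₁, rfl⟩ := List.exists_cons_of_ne_nil hM
  have hv : IsLyndon v := hly v (by simp)
  have hpw : (v :: M₁).Pairwise (fun a b => ¬ lex a b) := List.isChain_iff_pairwise.1 hchain
  have hall : ∀ l ∈ (v :: M₁), l = v := by
    rcases eq_or_ne M₁ [] with rfl | hM₁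
    · intro l hl; simpa using hl
    · obtain ⟨M₂, x, rfl⟩ := M₁.eq_nil_or_concat'.resolve_left hM₁
      have hxly : IsLyndon x := hly x (by simp)
      have hpwtail : (M₂ ++ [x]).Pairwise (fun a b => ¬ lex a b) :=
        (List.pairwise_cons.1 hpw).2
      have hcons : ∀ b ∈ M₂ ++ [x], ¬ lex v b := (List.pairwise_cons.1 hpw).1
      have hdrop : ∀ a ∈ M₂, ¬ lex a x := by
        intro a haa
        exact (List.pairwise_append.1 hpwtail).2.2 a haa x (by simp)
      have hsv : s = v ++ (M₂.flatten ++ x) := by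
        rw [← hflat]; simp
      have hxv : x = v := by
        have hnxv : ¬ lex x v := by
          intro hxv
          have hsplit : s = (v ++ M₂.flatten) ++ x := by
            rw [hsv, List.append_assoc]
          have := hmin (v ++ M₂.flatten) x hsplit (by simp [hv.1]) hxly.1
          apply this
          have hkey := lyndon_aux hv hxly.1 hxv M₂.flatten (M₂.flatten ++ x)
          rw [hsv]
          simpa [List.append_assoc] using hkey
        have hnvx : ¬ lex v x := hcons x (by simp)
        rcases lex_trichotomy x v with h | h | h
        · exact absurd h hnxv
        · exact h
        · exact absurd h hnvx
      intro l hl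
      rcases List.mem_cons.1 hl with rfl | hlM₁
      · rfl
      · have h1 : ¬ lex v l := hcons l hlM₁
        have h2 : ¬ lex l v := by
          rcases List.mem_append.1 hlM₁ with h | h
          · rw [← hxv]; exact hdrop l h
          · simp at h; rw [h, hxv]; exact lex_irrefl v
        rcases lex_trichotomy l v with h | h | h
        · exact absurd h h2
        · exact h
        · exact absurd h h1
  have hrep : v :: M₁ = List.replicate (v :: M₁).length v :=
    List.eq_replicate_of_mem hall
  refine ⟨v, (v :: M₁).length, hv, by simp, ?_⟩
  rw [← hflat, powW, ← hrep]

theorem take_powW (v : List (Fin n)) : ∀ (m k : ℕ), m ≤ k →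
    (powW v k).take (v.length * m) = powW v m := by
  intro m
  induction m with
  | zero => intro k _; simp [powW_zero]
  | succ m ih =>
    intro k hk
    obtain ⟨k₀, rfl⟩ : ∃ k₀, k = k₀ + 1 := ⟨k - 1, by omega⟩
    rw [powW_succ, Nat.mul_succ, Nat.add_comm (v.length * m) v.length, List.take_length_add_append,
      ih k₀ (by omega), ← powW_succ]

/-- Uniqueness of the Lyndon root of a word. -/
theorem lyndon_pow_inj {v v' : List (Fin n)} (hv : IsLyndon v) (hv' : IsLyndon v')
    {k k' : ℕ} (hk : 1 ≤ k) (hk' : 1 ≤ k') (h : powW v k = powW v' k')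
    (hle : v.length ≤ v'.length) : v = v' := by
  have h0 : 0 < v.length := List.length_pos_iff.2 hv.1
  have h0' : 0 < v'.length := List.length_pos_iff.2 hv'.1
  have hrot : (powW v k).rotate v'.length = powW v k := by
    rw [h]
    have := rotate_powW_mul_add (v := v') hk' 1 0
    simpa using this
  have hdvd : v.length ∣ v'.length :=
    Nat.dvd_of_mod_eq_zero (lyndon_pow_rotate_eq hv hk hrot)
  obtain ⟨m, hm⟩ := hdvd
  have hm1 : 1 ≤ m := by
    rcases Nat.eq_zero_or_pos m with rfl | h
    · rw [Nat.mul_zero] at hm; omega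
    · exact h
  have hmk : m ≤ k := by
    have hlen : k * v.length = k' * v'.length := by
      have := congrArg List.length h
      rwa [length_powW, length_powW] at this
    have h2 : v'.length ≤ k' * v'.length := Nat.le_mul_of_pos_left _ hk'
    nlinarith
  have hv'take : (powW v k).take v'.length = v' := by
    rw [h]
    obtain ⟨k₀, rfl⟩ : ∃ k₀, k' = k₀ + 1 := ⟨k' - 1, by omega⟩
    rw [powW_succ]
    exact List.take_left
  have hv'pow : v' = powW v m := by
    rw [← hv'take, hm, take_powW v m k hmk]
  rcases eq_or_lt_of_le hm1 with hm1' | hm2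
  · rw [hv'pow, ← hm1', powW_one]
  · exfalso
    obtain ⟨m₀, rfl⟩ : ∃ m₀, m = m₀ + 1 := ⟨m - 1, by omega⟩
    have hm₀ : 1 ≤ m₀ := by omega
    have hsuf : lex v' v := hv'.2 (powW v m₀) v (by rw [hv'pow, powW_succ'])
      (powW_ne_nil hv.1 hm₀) hv.1
    have hpre : v <+: v' := ⟨powW v m₀, by rw [hv'pow, powW_succ]⟩
    exact not_lex_of_prefix hpre hsuf

theorem rotate_to_rotate {l : List (Fin n)} (hl : l ≠ []) (i j : ℕ) :
    ∃ d, (l.rotate i).rotate d = l.rotate j := by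
  have hlen : 0 < l.length := List.length_pos_iff.2 hl
  refine ⟨(l.length - i % l.length) + j, ?_⟩
  rw [List.rotate_rotate]
  have hmod : (i + ((l.length - i % l.length) + j)) % l.length = j % l.length := by
    have h1 : i % l.length < l.length := Nat.mod_lt _ hlen
    have h2 : i + ((l.length - i % l.length) + j) =
        l.length * (i / l.length + 1) + j := by
      have := Nat.div_add_mod i l.length
      ring_nf
      omega
    rw [h2, Nat.mul_add_mod]
  rw [← List.rotate_mod, hmod, List.rotate_mod]

theorem exists_min_rotation {l : List (Fin n)} (hl : l ≠ []) :
    ∃ i, ∀ j, ¬ lex (l.rotate j) (l.rotate i) := by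
  have hlen : 0 < l.length := List.length_pos_iff.2 hl
  set S := (Finset.range l.length).image (fun i => l.rotate i) with hS
  have hSne : S.Nonempty :=
    ⟨l.rotate 0, Finset.mem_image.2 ⟨0, Finset.mem_range.2 hlen, rfl⟩⟩
  obtain ⟨i, _, hieq⟩ := Finset.mem_image.1 (S.min'_mem hSne)
  refine ⟨i, fun j => ?_⟩
  have hjS : l.rotate j ∈ S := Finset.mem_image.2
    ⟨j % l.length, Finset.mem_range.2 (Nat.mod_lt _ hlen), List.rotate_mod l j⟩
  have hle : S.min' hSne ≤ l.rotate j := S.min'_le _ hjS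
  rw [← hieq] at hle
  intro hlex
  exact absurd (show l.rotate j < l.rotate i from hlex) (not_lt.2 hle)

theorem rotateW_eq_rotate_one (l : List (Fin n)) : rotateW l = l.rotate 1 := by
  cases l with
  | nil => simp [rotateW]
  | cons a t =>
    show t ++ [a] = (a :: t).rotate (0 + 1)
    rw [List.rotate_cons_succ, List.rotate_zero]

theorem rot2W_iter (t : ℕ) (a : Fin n) (l : List (Fin n)) :
    rot2W^[t] (a :: l) = a :: l.rotate t := by
  induction t generalizing l with
  | zero => simp
  | succ t ih =>
    rw [Function.iterate_succ_apply]
    show rot2W^[t] (a :: rotateW l) = a :: l.rotate (t + 1)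
    rw [ih, rotateW_eq_rotate_one, List.rotate_rotate, Nat.add_comm 1 t]

theorem count_rotate (l : List (Fin n)) (i : ℕ) (x : Fin n) :
    (l.rotate i).count x = l.count x :=
  (List.rotate_perm l i).count_eq x

end Lyndon

/-- Under the ℤ-action fixing the first letter and cyclically rotating the
rest, the orbit of any word `w` of length `≥ 2` contains a unique word of the form
`j v^k` with `j` a letter, `v` Lyndon and `k ≥ 1`; moreover `k` divides `m_j − 1` and
`k` divides `m_t` for every letter `t ≠ j`, where `m` is the degree of `w`. -/
theorem stmt14 {n : ℕ} (w : List (Fin n)) (hw : 2 ≤ w.length) :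
    ∃! p : Fin n × List (Fin n) × ℕ, IsLyndon p.2.1 ∧ 1 ≤ p.2.2 ∧
      (∃ t : ℕ, rot2W^[t] w = p.1 :: powW p.2.1 p.2.2) ∧
      p.2.2 ∣ (degreeW w p.1 - 1) ∧
      (∀ s : Fin n, s ≠ p.1 → p.2.2 ∣ degreeW w s) := by
  obtain ⟨j, l, rfl⟩ : ∃ j l, w = j :: l := by
    cases w with
    | nil => simp at hw
    | cons j l => exact ⟨j, l, rfl⟩
  have hl : l ≠ [] := by
    intro h
    subst h
    simp at hw
  -- minimal rotation of l
  obtain ⟨i, hmini⟩ := exists_min_rotation hl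
  set s : List (Fin n) := l.rotate i with hsdef
  have hs : s ≠ [] := by
    intro h
    have := congrArg List.length h
    rw [hsdef, List.length_rotate] at this
    exact hl (List.length_eq_zero_iff.1 this)
  have hnec : ∀ u x : List (Fin n), s = u ++ x → u ≠ [] → x ≠ [] →
      ¬ List.Lex (· < ·) (x ++ u) s := by
    intro u x huv hu hx
    have hulen : u.length ≤ s.length := by
      rw [huv, List.length_append]; omega
    have hrot : s.rotate u.length = x ++ u := by
      rw [huv, List.rotate_eq_drop_append_take (by simpa [← huv] using hulen),
        List.drop_left, List.take_left]
    have : s.rotate u.length = l.rotate (i + u.length) := by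
      rw [hsdef, List.rotate_rotate]
    rw [← hrot, this]
    exact hmini (i + u.length)
  obtain ⟨v, k, hv, hk, hseq⟩ := necklace_eq_pow hs hnec
  -- counts
  have hcount : ∀ x : Fin n, l.count x = k * v.count x := by
    intro x
    rw [← count_rotate l i x, ← hsdef, hseq, count_powW]
  refine ⟨(j, v, k), ⟨hv, hk, ⟨i, ?_⟩, ?_, ?_⟩, ?_⟩
  · rw [rot2W_iter, ← hsdef, hseq]
  · show k ∣ (j :: l).count j - 1
    rw [List.count_cons_self, Nat.add_sub_cancel, hcount j]
    exact Dvd.intro _ rfl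
  · intro x hx
    show k ∣ (j :: l).count x
    rw [List.count_cons_of_ne (Ne.symm hx), hcount x]
    exact Dvd.intro _ rfl
  · rintro ⟨j', v', k'⟩ ⟨hv', hk', ⟨t', ht'⟩, _, _⟩
    rw [rot2W_iter] at ht'
    obtain ⟨hj, hpow⟩ : j = j' ∧ l.rotate t' = powW v' k' := by
      rw [List.cons.injEq] at ht'
      exact ht'
    -- both Lyndon powers are rotations of l, hence equal
    have hpows : powW v' k' = powW v k := by
      obtain ⟨d1, hd1⟩ := rotate_to_rotate hl t' i
      obtain ⟨d2, hd2⟩ := rotate_to_rotate hl i t'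
      have h1 : ¬ List.Lex (· < ·) (powW v k) (powW v' k') := by
        have := lyndon_pow_min hv' hk' d1
        rwa [← hpow, hd1, ← hsdef, hseq, hpow] at this
      have h2 : ¬ List.Lex (· < ·) (powW v' k') (powW v k) := by
        have := lyndon_pow_min hv hk d2
        rwa [← hseq, hsdef, hd2, hpow, ← hsdef, hseq] at this
      rcases lex_trichotomy (powW v' k') (powW v k) with h | h | h
      · exact absurd h h2
      · exact h
      · exact absurd h h1
    have hvv : v' = v := by
      rcases le_total v'.length v.length with hle | hle
      · exact lyndon_pow_inj hv' hv hk' hk hpows hle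
      · exact (lyndon_pow_inj hv hv' hk hk' hpows.symm hle).symm
    have hkk : k' = k := by
      have := congrArg List.length hpows
      rw [length_powW, length_powW, hvv] at this
      have h0 : 0 < v.length := List.length_pos_iff.2 hv.1
      exact Nat.eq_of_mul_eq_mul_right h0 this
    rw [Prod.mk.injEq, Prod.mk.injEq]
    exact ⟨hj.symm, hvv, hkk⟩
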